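/- Define row-sum matrices R_i = Σ_{j≠i} L_{ij} for the n×n elementary rate matrices L_{ij} = E_{ij} - E_{jj}. Then [R_i, R_j] = R_i - R_j for all i, j; hence the span of {R_1,...,R_n} (the Felsenstein 81 model) is a Lie algebra. -/

import Mathlib

open Matrix

/-- Elementary rate matrices `L i j = E i j - E j j`. -/
def Lmat {n : ℕ} (i j : Fin n) : Matrix (Fin n) (Fin n) ℂ :=
  Matrix.single i j 1 - Matrix.single j j 1

/-- Row-sum matrices `R i = ∑_{j ≠ i} L i j`. -/
noncomputable def Rmat {n : ℕ} (i : Fin n) : Matrix (Fin n) (Fin n) ℂ :=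
  ∑ j ∈ Finset.univ.erase i, Lmat i j

/-- Matrix with all-ones in row `i` and zeros elsewhere. -/
def Smat {n : ℕ} (i : Fin n) : Matrix (Fin n) (Fin n) ℂ :=
  Matrix.of fun a _ => if a = i then 1 else 0

lemma sum_row_std {n : ℕ} (i : Fin n) :
    (∑ j : Fin n, Matrix.single i j (1:ℂ)) = Smat i := by
  ext a b
  simp only [Matrix.sum_apply, Matrix.single, Matrix.of_apply, Smat]
  by_cases h : i = a <;> simp [h, eq_comm, Finset.filter_eq]

lemma sum_diag_std {n : ℕ} :
    (∑ j : Fin n, Matrix.single j j (1:ℂ)) = 1 := by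
  ext a b
  simp only [Matrix.sum_apply, Matrix.single, Matrix.of_apply, Matrix.one_apply]
  by_cases h : a = b
  · simp [h, eq_comm, Finset.filter_eq]
  · rw [if_neg h, Finset.sum_eq_zero]
    intro x _
    rw [if_neg]
    rintro ⟨h1, h2⟩
    exact h (h1.symm.trans h2)

lemma Rmat_eq {n : ℕ} (i : Fin n) : Rmat i = Smat i - 1 := by
  have h0 : Lmat i i = 0 := by simp [Lmat]
  have : Rmat i = ∑ j : Fin n, Lmat i j := by
    rw [Rmat, Finset.sum_erase _ h0]
  rw [this]
  simp only [Lmat, Finset.sum_sub_distrib, sum_row_std, sum_diag_std]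

lemma Smat_mul {n : ℕ} (i j : Fin n) : Smat i * Smat j = Smat i := by
  ext a b
  simp [Smat, Matrix.mul_apply]

theorem felsenstein81_is_lie_algebra {n : ℕ} :
    (∀ i j : Fin n, Rmat i * Rmat j - Rmat j * Rmat i = Rmat i - Rmat j) ∧
    ∀ X ∈ Submodule.span ℂ (Set.range (Rmat (n := n))),
      ∀ Y ∈ Submodule.span ℂ (Set.range (Rmat (n := n))),
        X * Y - Y * X ∈ Submodule.span ℂ (Set.range (Rmat (n := n))) := by
  have key : ∀ i j : Fin n, Rmat i * Rmat j - Rmat j * Rmat i = Rmat i - Rmat j := by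
    intro i j
    rw [Rmat_eq, Rmat_eq]
    simp only [sub_mul, mul_sub, mul_one, one_mul, Smat_mul]
    abel
  refine ⟨key, ?_⟩
  intro X hX Y hY
  induction hX using Submodule.span_induction with
  | mem x hx =>
    induction hY using Submodule.span_induction with
    | mem y hy =>
      obtain ⟨i, rfl⟩ := hx
      obtain ⟨j, rfl⟩ := hy
      rw [key i j]
      exact sub_mem (Submodule.subset_span ⟨i, rfl⟩) (Submodule.subset_span ⟨j, rfl⟩)
    | zero => simp
    | add y z _ _ hy hz =>
      have : x * (y + z) - (y + z) * x = (x * y - y * x) + (x * z - z * x) := by noncomm_ring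
      rw [this]; exact add_mem hy hz
    | smul c y _ hy =>
      have : x * (c • y) - (c • y) * x = c • (x * y - y * x) := by
        simp [mul_smul_comm, smul_mul_assoc, smul_sub]
      rw [this]; exact Submodule.smul_mem _ c hy
  | zero => simp
  | add y z _ _ hy hz =>
    have : (y + z) * Y - Y * (y + z) = (y * Y - Y * y) + (z * Y - Y * z) := by noncomm_ring
    rw [this]; exact add_mem hy hz
  | smul c y _ hy =>
    have : (c • y) * Y - Y * (c • y) = c • (y * Y - Y * y) := by
      simp [mul_smul_comm, smul_mul_assoc, smul_sub]
    rw [this]; exact Submodule.smul_mem _ c hy
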